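/- Let E and F be vector lattices with F Dedekind σ-complete, and for each n ≥ 1 let A_n be an n-multilinear map from E^n to F that is positive, i.e. A_n(X_1,…,X_n) ≥ 0 whenever X_1,…,X_n ≥ 0. If for some X ≥ 0 in E the partial sums ∑_{n=1}^{m} (1/n!)·A_n(X,…,X) are bounded above in F, then for every X' with 0 ≤ X' ≤ X the partial sums ∑_{n=1}^{m} (1/n!)·A_n(X',…,X') are also bounded above; that is, the set of nonnegative points of convergence of a power series of positive type is an order-star (it contains the whole order interval ⟨0, X⟩ together with each of its points X). -/

import Mathlib

/-- The set of nonnegative points at which a power series of positive type has bounded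
partial sums is an order-star: with each point `X` it contains the whole order
interval `⟨0, X⟩`. -/
theorem stmt_2 {E F : Type*}
    [Lattice E] [AddCommGroup E] [Module ℝ E]
    [CovariantClass E E (· + ·) (· ≤ ·)]
    [Lattice F] [AddCommGroup F] [Module ℝ F]
    [CovariantClass F F (· + ·) (· ≤ ·)]
    (hsmulE : ∀ (c : ℝ) (v : E), 0 ≤ c → 0 ≤ v → 0 ≤ c • v)
    (hsmulF : ∀ (c : ℝ) (w : F), 0 ≤ c → 0 ≤ w → 0 ≤ c • w)
    (hDedF : ∀ f : ℕ → F, Monotone f → BddAbove (Set.range f) →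
      ∃ l, IsLUB (Set.range f) l)
    (A : (n : ℕ) → MultilinearMap ℝ (fun _ : Fin n => E) F)
    (hpos : ∀ n, 1 ≤ n → ∀ X : Fin n → E, (∀ i, 0 ≤ X i) → 0 ≤ A n X)
    (X : E) (hX : 0 ≤ X)
    (hbdd : ∃ B : F, ∀ m : ℕ,
      (∑ n ∈ Finset.Icc 1 m, ((n.factorial : ℝ)⁻¹) • A n (fun _ => X)) ≤ B)
    (X' : E) (hX'0 : 0 ≤ X') (hX' : X' ≤ X) :
    ∃ B' : F, ∀ m : ℕ,
      (∑ n ∈ Finset.Icc 1 m, ((n.factorial : ℝ)⁻¹) • A n (fun _ => X')) ≤ B' := by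
  obtain ⟨B, hB⟩ := hbdd
  refine ⟨B, fun m => ?_⟩
  refine le_trans ?_ (hB m)
  have main : ∀ n ∈ Finset.Icc 1 m,
      ((n.factorial : ℝ)⁻¹) • A n (fun _ => X') ≤ ((n.factorial : ℝ)⁻¹) • A n (fun _ => X) := by
    intro n hn
    have hn1 : 1 ≤ n := (Finset.mem_Icc.1 hn).1
    have key : ∀ S : Finset (Fin n),
        A n (fun _ => X') ≤ A n (fun j => if j ∈ S then X else X') := by
      intro S
      induction S using Finset.induction_on with
      | empty => simp
      | @insert a S ha ih =>
        set f : Fin n → E := fun j => if j ∈ S then X else X' with hf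
        have hupd : (fun j => if j ∈ insert a S then X else X') =
            Function.update f a X := by
          funext j
          by_cases hj : j = a
          · subst hj; simp [Function.update, ha]
          · simp [Function.update, hj, Finset.mem_insert, hf]
        have hfa : f a = X' := by simp [hf, ha]
        have hsplit : A n (Function.update f a X) =
            A n (Function.update f a X') + A n (Function.update f a (X - X')) := by
          have := (A n).map_update_add f a X' (X - X')
          rwa [add_sub_cancel] at this
        have hupd' : Function.update f a X' = f := by
          funext j
          by_cases hj : j = a
          · subst hj; simp [Function.update, hfa]
          · simp [Function.update, hj]
        have hposterm : 0 ≤ A n (Function.update f a (X - X')) := by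
          refine hpos n hn1 _ fun i => ?_
          by_cases hi : i = a
          · subst hi; simpa [Function.update] using sub_nonneg.2 hX'
          · simp only [Function.update, hi]
            by_cases hiS : i ∈ S <;> simp [hf, hiS, hX, hX'0]
        calc A n (fun _ => X') ≤ A n f := ih
          _ ≤ A n f + A n (Function.update f a (X - X')) := le_add_of_nonneg_right hposterm
          _ = A n (Function.update f a X) := by rw [hsplit, hupd']
          _ = A n (fun j => if j ∈ insert a S then X else X') := by rw [hupd]
    have hAle : A n (fun _ => X') ≤ A n (fun _ => X) := by
      simpa using key Finset.univ
    have h0 : (0:F) ≤ ((n.factorial : ℝ)⁻¹) • (A n (fun _ => X) - A n (fun _ => X')) :=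
      hsmulF _ _ (by positivity) (sub_nonneg.2 hAle)
    rw [smul_sub] at h0
    exact sub_nonneg.1 h0
  have hsum : (0:F) ≤ ∑ n ∈ Finset.Icc 1 m,
      (((n.factorial : ℝ)⁻¹) • A n (fun _ => X) - ((n.factorial : ℝ)⁻¹) • A n (fun _ => X')) := by
    refine Finset.sum_induction _ (fun x => (0:F) ≤ x)
      (fun a b ha hb => le_trans ha (le_add_of_nonneg_right hb)) le_rfl ?_
    exact fun n hn => sub_nonneg.2 (main n hn)
  rw [Finset.sum_sub_distrib] at hsum
  exact sub_nonneg.1 hsum
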